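/- Let α > n, θ < 0, κ < 0, s₁, s₂ > 0, and let (u, v) be a pair of positive solutions of the system u(y) = ∫_{ℝ^n_+} v^κ(x) |x−y|^{α−n} |x−x^o|^{−s₂} dx for y ∈ ∂ℝ^n_+ and v(x) = ∫_{∂ℝ^n_+} u^θ(y) |x−y|^{α−n} |y−x^o|^{−s₁} dy for x ∈ ℝ^n_+. Then for every λ ∈ ℝ: u(y) − u_λ(y) = ∫_{Σ_{λ,n}} ( |x_λ − y|^{α−n} − |x − y|^{α−n} ) ( v_λ^κ(x)|x_λ − x^o|^{−s₂} − v^κ(x)|x − x^o|^{−s₂} ) dx for all y ∈ ∂ℝ^n_+, and v(x) − v_λ(x) = ∫_{Σ_{λ,n−1}} ( |y_λ − x|^{α−n} − |y − x|^{α−n} ) ( u_λ^θ(y)|y_λ − x^o|^{−s₁} − u^θ(y)|y − x^o|^{−s₁} ) dy for all x ∈ ℝ^n_+. -/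

import Mathlib

noncomputable section

open MeasureTheory Metric ENNReal

/-- `ℝ^n` with the Euclidean norm. -/
abbrev Eu (n : ℕ) : Type := EuclideanSpace ℝ (Fin n)

/-- The last coordinate `x_n` of a point `x ∈ ℝ^n`. -/
def lastCoord (n : ℕ) (x : Eu n) : ℝ :=
  if h : 0 < n then x ⟨n - 1, Nat.sub_lt h Nat.one_pos⟩ else 0

/-- The first coordinate `x_1` of a point `x ∈ ℝ^n`. -/
def firstCoord (n : ℕ) (x : Eu n) : ℝ :=
  if h : 0 < n then x ⟨0, h⟩ else 0

/-- The open upper half space `ℝ^n_+ = {x : x_n > 0}`. -/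
def upperHalf (n : ℕ) : Set (Eu n) := {x | 0 < lastCoord n x}

/-- The identification of `ℝ^{n-1}` with the boundary `∂ℝ^n_+ = {x : x_n = 0}`. -/
def emb (n : ℕ) (y : Eu (n - 1)) : Eu n :=
  (EuclideanSpace.equiv (Fin n) ℝ).symm fun i =>
    if h : (i : ℕ) < n - 1 then y ⟨i, h⟩ else 0

/-- The point `z^o = (0,…,0,-1) ∈ ℝ^n`. -/
def zo (n : ℕ) : Eu n :=
  (EuclideanSpace.equiv (Fin n) ℝ).symm fun i => if (i : ℕ) = n - 1 then -1 else 0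

/-- The point `x^o = (0,…,0,-2) ∈ ℝ^n`. -/
def xo (n : ℕ) : Eu n :=
  (EuclideanSpace.equiv (Fin n) ℝ).symm fun i => if (i : ℕ) = n - 1 then -2 else 0

/-- The surface measure on the sphere `∂B^n = {x : |x - z^o| = 1}`. -/
def surf (n : ℕ) : Measure (Eu n) :=
  Measure.map (fun p : sphere (0 : Eu n) 1 => zo n + (p : Eu n))
    (volume : Measure (Eu n)).toSphere

/-- Lebesgue measure restricted to the open unit ball `B^n` centered at `z^o`. -/
def ballM (n : ℕ) : Measure (Eu n) := (volume : Measure (Eu n)).restrict (ball (zo n) 1)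

/-- `ω_n`, the volume of the unit ball in `ℝ^n`. -/
def unitBallVol (n : ℕ) : ℝ := ((volume : Measure (Eu n)) (ball (0 : Eu n) 1)).toReal

/-- `(∫ F^r)^{1/r}` (in `ℝ≥0∞`) of a nonnegative function `F`, for an arbitrary
nonzero real exponent `r`. -/
def eLp {X : Type*} [MeasurableSpace X] (μ : Measure X) (f : X → ℝ) (r : ℝ) : ℝ≥0∞ :=
  (∫⁻ x, ENNReal.ofReal (f x) ^ r ∂μ) ^ (1 / r)

/-- `(∫ F^r)^{1/r}` (in `ℝ≥0∞`) of an `ℝ≥0∞`-valued function `F`. -/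
def eLpE {X : Type*} [MeasurableSpace X] (μ : Measure X) (F : X → ℝ≥0∞) (r : ℝ) : ℝ≥0∞ :=
  (∫⁻ x, F x ^ r ∂μ) ^ (1 / r)

/-- The real `L^r`-norm `(∫ |f|^r)^{1/r}`. -/
def rLp {X : Type*} [MeasurableSpace X] (μ : Measure X) (f : X → ℝ) (r : ℝ) : ℝ :=
  (∫ x, |f x| ^ r ∂μ) ^ (1 / r)

/-- The sharp constant `C_{e1}(n,α)`. -/
def Ce1 (n : ℕ) (α : ℝ) : ℝ :=
  ((n : ℝ) * unitBallVol n) ^ (-(((n : ℝ) + α - 2) / (2 * ((n : ℝ) - 1)))) *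
    (∫ ξ in ball (zo n) 1,
        (∫ ζ, ‖ξ - ζ‖ ^ (α - (n : ℝ)) ∂surf n) ^ (2 * (n : ℝ) / ((n : ℝ) - α))) ^
      (((n : ℝ) - α) / (2 * (n : ℝ)))

/-- The sharp constant `C_{e2}(n,α)`. -/
def Ce2 (n : ℕ) (α : ℝ) : ℝ :=
  ((n : ℝ) * unitBallVol n) ^ (-(((n : ℝ) + α - 4) / (2 * ((n : ℝ) - 1)))) *
    (∫ ξ in ball (zo n) 1,
        (∫ ζ, (1 - ‖ξ - zo n‖ ^ 2) * ‖ξ - ζ‖ ^ (-((n : ℝ) - α + 2)) ∂surf n) ^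
          (2 * (n : ℝ) / ((n : ℝ) - α))) ^ (((n : ℝ) - α) / (2 * (n : ℝ)))

/-- Reflection `x ↦ x_λ = (2λ - x_1, x_2, …, x_m)` across the hyperplane
`{x_1 = λ}`. -/
def reflFst (m : ℕ) (l : ℝ) (x : Eu m) : Eu m :=
  (EuclideanSpace.equiv (Fin m) ℝ).symm fun i => if (i : ℕ) = 0 then 2 * l - x i else x i

open Set

private lemma reflFst_apply (m : ℕ) (l : ℝ) (x : Eu m) (i : Fin m) :
    reflFst m l x i = if (i : ℕ) = 0 then 2 * l - x i else x i := rfl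

private lemma emb_apply (n : ℕ) (y : Eu (n - 1)) (i : Fin n) :
    emb n y i = if h : (i : ℕ) < n - 1 then y ⟨i, h⟩ else 0 := rfl

private lemma reflFst_invol (m : ℕ) (l : ℝ) : Function.Involutive (reflFst m l) := by
  intro x
  ext i
  simp only [reflFst_apply]
  split_ifs with h
  · ring
  · rfl

private lemma reflFst_norm (m : ℕ) (l : ℝ) (a b : Eu m) :
    ‖reflFst m l a - reflFst m l b‖ = ‖a - b‖ := by
  rw [EuclideanSpace.norm_eq, EuclideanSpace.norm_eq]
  congr 1
  refine Finset.sum_congr rfl fun i _ => ?_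
  have : (reflFst m l a - reflFst m l b) i = (reflFst m l a) i - (reflFst m l b) i := rfl
  rw [this, reflFst_apply, reflFst_apply]
  have hab : (a - b) i = a i - b i := rfl
  rw [hab]
  split_ifs with h
  · rw [show 2 * l - a i - (2 * l - b i) = -(a i - b i) by ring, norm_neg]
  · rfl

private lemma reflFst_measurePreserving (m : ℕ) (l : ℝ) :
    MeasurePreserving (reflFst m l) volume volume := by
  have h2 : MeasurePreserving
      (fun (f : Fin m → ℝ) (i : Fin m) => if (i : ℕ) = 0 then 2 * l - f i else f i) volume volume := by
    have hf : ∀ i : Fin m,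
        MeasurePreserving (fun t : ℝ => if (i : ℕ) = 0 then 2 * l - t else t) volume volume := by
      intro i
      by_cases h : (i : ℕ) = 0
      · simpa [h] using Measure.measurePreserving_sub_left (volume : Measure ℝ) (2 * l)
      · simp only [if_neg h]; exact MeasurePreserving.id _
    exact volume_preserving_pi hf
  have key : reflFst m l = ((MeasurableEquiv.toLp 2 (Fin m → ℝ)).symm).symm ∘
      (fun (f : Fin m → ℝ) (i : Fin m) => if (i : ℕ) = 0 then 2 * l - f i else f i) ∘
      ((MeasurableEquiv.toLp 2 (Fin m → ℝ)).symm) := rfl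
  rw [key]
  exact (((EuclideanSpace.volume_preserving_symm_measurableEquiv_toLp (Fin m)).symm).comp h2).comp
    (EuclideanSpace.volume_preserving_symm_measurableEquiv_toLp (Fin m))

private lemma reflFst_norm' (m : ℕ) (l : ℝ) (a b : Eu m) :
    ‖a - reflFst m l b‖ = ‖reflFst m l a - b‖ := by
  have h := reflFst_norm m l a (reflFst m l b)
  rw [reflFst_invol m l b] at h
  exact h.symm

private lemma firstCoord_reflFst (m : ℕ) (hm : 0 < m) (l : ℝ) (x : Eu m) :
    firstCoord m (reflFst m l x) = 2 * l - firstCoord m x := by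
  simp only [firstCoord, dif_pos hm, reflFst_apply]
  simp

private lemma lastCoord_reflFst (n : ℕ) (hn : 2 ≤ n) (l : ℝ) (x : Eu n) :
    lastCoord n (reflFst n l x) = lastCoord n x := by
  have h0 : 0 < n := by omega
  simp only [lastCoord, dif_pos h0, reflFst_apply]
  rw [if_neg]
  show ¬ (n - 1 = 0)
  omega

private lemma emb_reflFst (n : ℕ) (hn : 2 ≤ n) (l : ℝ) (y : Eu (n - 1)) :
    emb n (reflFst (n - 1) l y) = reflFst n l (emb n y) := by
  ext i
  rw [reflFst_apply, emb_apply, emb_apply]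
  by_cases h0 : (i : ℕ) = 0
  · have h : (i : ℕ) < n - 1 := by omega
    rw [dif_pos h, dif_pos h, reflFst_apply, if_pos h0]
  · by_cases h : (i : ℕ) < n - 1
    · rw [dif_pos h, dif_pos h, reflFst_apply, if_neg h0]
    · rw [dif_neg h, dif_neg h, if_neg h0]

private lemma coord_measurable (m : ℕ) (i : Fin m) : Measurable (fun x : Eu m => x i) :=
  (measurable_pi_apply i).comp ((MeasurableEquiv.toLp 2 (Fin m → ℝ)).symm).measurable

private lemma firstCoord_measurable (m : ℕ) : Measurable (firstCoord m) := by
  by_cases hm : 0 < m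
  · have : firstCoord m = fun x : Eu m => x ⟨0, hm⟩ := funext fun x => dif_pos hm
    rw [this]; exact coord_measurable m _
  · have : firstCoord m = fun _ => (0 : ℝ) := funext fun x => dif_neg hm
    rw [this]; exact measurable_const

private lemma lastCoord_measurable (m : ℕ) : Measurable (lastCoord m) := by
  by_cases hm : 0 < m
  · have : lastCoord m = fun x : Eu m => x ⟨m - 1, Nat.sub_lt hm Nat.one_pos⟩ :=
      funext fun x => dif_pos hm
    rw [this]; exact coord_measurable m _
  · have : lastCoord m = fun _ => (0 : ℝ) := funext fun x => dif_neg hm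
    rw [this]; exact measurable_const

private lemma upperHalf_measurableSet (n : ℕ) : MeasurableSet (upperHalf n) :=
  measurableSet_lt measurable_const (lastCoord_measurable n)

private lemma emb_measurable (n : ℕ) : Measurable (emb n) := by
  have key : emb n = ((MeasurableEquiv.toLp 2 (Fin n → ℝ)).symm).symm ∘
      (fun (f : Fin (n - 1) → ℝ) (i : Fin n) => if h : (i : ℕ) < n - 1 then f ⟨i, h⟩ else 0) ∘
      ((MeasurableEquiv.toLp 2 (Fin (n - 1) → ℝ)).symm) := rfl
  rw [key]
  have hmid : Measurable
      (fun (f : Fin (n - 1) → ℝ) (i : Fin n) => if h : (i : ℕ) < n - 1 then f ⟨i, h⟩ else 0) := by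
    refine measurable_pi_iff.mpr fun i => ?_
    by_cases h : (i : ℕ) < n - 1
    · simpa [h] using measurable_pi_apply (⟨i, h⟩ : Fin (n - 1))
    · simp [h]
  exact (MeasurableEquiv.measurable _).comp (hmid.comp (MeasurableEquiv.measurable _))

private lemma hyperplane_null (m : ℕ) (hm : 0 < m) (l : ℝ) :
    volume {x : Eu m | firstCoord m x = l} = 0 := by
  set i0 : Fin m := ⟨0, hm⟩
  set φ : Eu m →ₗ[ℝ] ℝ :=
    (LinearMap.proj i0 : (Fin m → ℝ) →ₗ[ℝ] ℝ).comp
      (WithLp.linearEquiv 2 ℝ (Fin m → ℝ)).toLinearMap with hφ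
  have hφx : ∀ x : Eu m, φ x = x i0 := fun x => rfl
  have hKne : LinearMap.ker φ ≠ ⊤ := by
    intro h
    have h1 : φ (EuclideanSpace.single i0 1) = 0 := by
      rw [← LinearMap.mem_ker, h]; trivial
    rw [hφx, EuclideanSpace.single_apply, if_pos rfl] at h1
    exact one_ne_zero h1
  have h0 : volume (↑(LinearMap.ker φ) : Set (Eu m)) = 0 :=
    Measure.addHaar_submodule _ _ hKne
  set c : Eu m := EuclideanSpace.single i0 l with hc
  have hset : {x : Eu m | firstCoord m x = l} =
      (fun x : Eu m => x + (-c)) ⁻¹' ↑(LinearMap.ker φ) := by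
    ext x
    simp only [Set.mem_setOf_eq, Set.mem_preimage, SetLike.mem_coe, LinearMap.mem_ker, hφx]
    have : (x + (-c)) i0 = x i0 - c i0 := rfl
    rw [this, hc, EuclideanSpace.single_apply, if_pos rfl]
    rw [firstCoord, dif_pos hm]
    constructor
    · intro h; rw [show (⟨0, hm⟩ : Fin m) = i0 from rfl] at h; rw [h]; ring
    · intro h; show x i0 = l; linarith
  rw [hset, measure_preimage_add_right]
  exact h0

private lemma key {X : Type*} [MeasurableSpace X] (μ : Measure X)
    (T : X → X) (hT : MeasurePreserving T μ μ) (hTT : Function.Involutive T)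
    (A S : Set X) (hA : MeasurableSet A) (hS : MeasurableSet S)
    (hTA : ∀ x, T x ∈ A ↔ x ∈ A)
    (hcov : ∀ x, x ∉ S → T x ∈ S)
    (hnull : μ (S ∩ T ⁻¹' S) = 0)
    (K g : X → ℝ) (hK : Measurable K) (hg : Measurable g)
    (hKpos : ∀ x, 0 ≤ K x) (hgpos : ∀ x ∈ A, 0 ≤ g x)
    (a b : ℝ) (ha0 : 0 ≤ a) (hb0 : 0 ≤ b)
    (ha : ∫⁻ x in A, ENNReal.ofReal (K x * g x) ∂μ = ENNReal.ofReal a)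
    (hb : ∫⁻ x in A, ENNReal.ofReal (K (T x) * g x) ∂μ = ENNReal.ofReal b) :
    a - b = ∫ x in A ∩ S, (K (T x) - K x) * (g (T x) - g x) ∂μ := by
  -- T as a measurable equiv
  let Te : X ≃ᵐ X := ⟨hTT.toPerm, hT.measurable, hT.measurable⟩
  have hemb : MeasurableEmbedding T := Te.measurableEmbedding
  -- nonnegativity a.e. on A
  have hgae : 0 ≤ᵐ[μ.restrict A] g := by
    filter_upwards [ae_restrict_mem hA] with x hx using hgpos x hx
  have hgTae : 0 ≤ᵐ[μ.restrict A] fun x => g (T x) := by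
    filter_upwards [ae_restrict_mem hA] with x hx using hgpos (T x) ((hTA x).mpr hx)
  -- integrability helper
  have integr : ∀ (K' : X → ℝ), Measurable K' → (∀ x, 0 ≤ K' x) →
      (∫⁻ x in A, ENNReal.ofReal (K' x * g x) ∂μ) ≠ ⊤ →
      IntegrableOn (fun x => K' x * g x) A μ := by
    intro K' hK' hK'pos hfin
    refine ⟨((hK'.mul hg).aemeasurable).aestronglyMeasurable, ?_⟩
    rw [hasFiniteIntegral_iff_norm]
    have : ∀ᵐ x ∂μ.restrict A, ENNReal.ofReal ‖K' x * g x‖ = ENNReal.ofReal (K' x * g x) := by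
      filter_upwards [hgae] with x hx
      rw [Real.norm_eq_abs, abs_of_nonneg (mul_nonneg (hK'pos x) hx)]
    rw [lintegral_congr_ae this]
    exact hfin.lt_top
  have hif : IntegrableOn (fun x => K x * g x) A μ :=
    integr K hK hKpos (by rw [ha]; exact ofReal_ne_top)
  have hif' : IntegrableOn (fun x => K (T x) * g x) A μ :=
    integr (fun x => K (T x)) (hK.comp hT.measurable)
      (fun x => hKpos (T x)) (by rw [hb]; exact ofReal_ne_top)
  -- real integrals
  have hAint : ∫ x in A, K x * g x ∂μ = a := by
    rw [integral_eq_lintegral_of_nonneg_ae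
      (by filter_upwards [hgae] with x hx using mul_nonneg (hKpos x) hx)
      hif.aestronglyMeasurable, ha, ENNReal.toReal_ofReal ha0]
  have hBint : ∫ x in A, K (T x) * g x ∂μ = b := by
    rw [integral_eq_lintegral_of_nonneg_ae
      (by filter_upwards [hgae] with x hx using mul_nonneg (hKpos _) hx)
      hif'.aestronglyMeasurable, hb, ENNReal.toReal_ofReal hb0]
  -- T-invariance of A as preimage
  have hTAset : T ⁻¹' A = A := by ext x; exact hTA x
  -- splitting
  set A₁ : Set X := A ∩ S with hA₁def
  set A₂ : Set X := A \ S with hA₂def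
  have hA₁ : MeasurableSet A₁ := hA.inter hS
  have hA₂ : MeasurableSet A₂ := hA.diff hS
  have hAeq : A₁ ∪ A₂ = A := Set.inter_union_diff A S
  have hdisj : Disjoint A₁ A₂ := Set.disjoint_sdiff_right.mono_left Set.inter_subset_right
  -- T ⁻¹' A₂ ≈ A₁
  have hpre : T ⁻¹' A₂ =ᵐ[μ] A₁ := by
    have hsub : T ⁻¹' A₂ ⊆ A₁ := by
      rintro x ⟨hxA, hxS⟩
      exact ⟨(hTA x).mp hxA, by_contra fun hx => hxS (hcov x hx)⟩
    have hsub2 : A₁ \ T ⁻¹' A₂ ⊆ S ∩ T ⁻¹' S := by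
      rintro x ⟨⟨hxA, hxS⟩, hx2⟩
      refine ⟨hxS, ?_⟩
      by_contra hTS
      exact hx2 ⟨(hTA x).mpr hxA, hTS⟩
    have h1 : μ (T ⁻¹' A₂ \ A₁) = 0 := by
      rw [Set.diff_eq_empty.mpr hsub]; exact measure_empty
    have h2 : μ (A₁ \ T ⁻¹' A₂) = 0 := measure_mono_null hsub2 hnull
    exact MeasureTheory.measure_symmDiff_eq_zero_iff.mp (by
      rw [Set.symmDiff_def]; exact measure_union_null h1 h2)
  -- change of variables on A₂
  have cov : ∀ (f : X → ℝ), ∫ x in A₂, f x ∂μ = ∫ x in A₁, f (T x) ∂μ := by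
    intro f
    rw [← hT.setIntegral_preimage_emb hemb f A₂]
    exact setIntegral_congr_set hpre
  -- decompose the integrals
  have split : ∀ (f : X → ℝ), IntegrableOn f A μ →
      ∫ x in A, f x ∂μ = ∫ x in A₁, f x ∂μ + ∫ x in A₁, f (T x) ∂μ := by
    intro f hf
    rw [← cov f, ← setIntegral_union hdisj hA₂ (hf.mono_set (hAeq ▸ Set.subset_union_left))
      (hf.mono_set (hAeq ▸ Set.subset_union_right)), hAeq]
  have e1 := split _ hif
  have e2 := split _ hif'
  have hTTeq : ∀ x, T (T x) = x := hTT
  simp only [hTTeq] at e2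
  -- integrability on A₁ of the four pieces
  have hTrest : MeasurePreserving T (μ.restrict A) (μ.restrict A) := by
    have := hT.restrict_preimage (s := A) hA
    rwa [hTAset] at this
  have hifT : IntegrableOn (fun x => K (T x) * g (T x)) A μ := by
    have : Integrable ((fun x => K x * g x) ∘ T) (μ.restrict A) :=
      (hTrest.integrable_comp hif.aestronglyMeasurable).mpr hif
    exact this
  have hifT' : IntegrableOn (fun x => K x * g (T x)) A μ := by
    have : Integrable ((fun x => K (T x) * g x) ∘ T) (μ.restrict A) :=
      (hTrest.integrable_comp hif'.aestronglyMeasurable).mpr hif'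
    have heq : ((fun x => K (T x) * g x) ∘ T) = fun x => K x * g (T x) := by
      funext x; simp [Function.comp, hTT x]
    rwa [heq] at this
  have m1 : IntegrableOn (fun x => K x * g x) A₁ μ :=
    hif.mono_set Set.inter_subset_left
  have m2 : IntegrableOn (fun x => K (T x) * g (T x)) A₁ μ :=
    hifT.mono_set Set.inter_subset_left
  have m3 : IntegrableOn (fun x => K (T x) * g x) A₁ μ :=
    hif'.mono_set Set.inter_subset_left
  have m4 : IntegrableOn (fun x => K x * g (T x)) A₁ μ :=
    hifT'.mono_set Set.inter_subset_left
  rw [← hAint, ← hBint, e1, e2]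
  rw [show (∫ x in A₁, (K (T x) - K x) * (g (T x) - g x) ∂μ) =
      ∫ x in A₁, ((K x * g x + K (T x) * g (T x)) - (K (T x) * g x + K x * g (T x))) ∂μ from
      setIntegral_congr_fun hA₁ (fun x _ => by ring)]
  have i12 : Integrable (fun x => K x * g x + K (T x) * g (T x)) (μ.restrict A₁) := m1.add m2
  have i34 : Integrable (fun x => K (T x) * g x + K x * g (T x)) (μ.restrict A₁) := m3.add m4
  rw [integral_sub i12 i34, integral_add m1 m2, integral_add m3 m4]



/-- Lemma 2.10, the moving plane identities for positive
solutions of the integral system on the upper half space. -/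
theorem system_moving_plane_identities
    (n : ℕ) (hn : 2 ≤ n) (α : ℝ) (hα : (n : ℝ) < α)
    (θ κ s₁ s₂ : ℝ) (hθ : θ < 0) (hκ : κ < 0) (hs₁ : 0 < s₁) (hs₂ : 0 < s₂)
    (u : Eu (n - 1) → ℝ) (v : Eu n → ℝ)
    (hum : Measurable u) (hvm : Measurable v)
    (hu0 : ∀ y, 0 < u y) (hv0 : ∀ x ∈ upperHalf n, 0 < v x)
    (hu : ∀ y, ENNReal.ofReal (u y) =
      ∫⁻ x in upperHalf n,
        ENNReal.ofReal (v x ^ κ * ‖x - emb n y‖ ^ (α - (n : ℝ)) * ‖x - xo n‖ ^ (-s₂)))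
    (hv : ∀ x ∈ upperHalf n, ENNReal.ofReal (v x) =
      ∫⁻ y, ENNReal.ofReal (u y ^ θ * ‖x - emb n y‖ ^ (α - (n : ℝ)) *
        ‖emb n y - xo n‖ ^ (-s₁))) :
    ∀ l : ℝ,
      (∀ y : Eu (n - 1),
        u y - u (reflFst (n - 1) l y) =
          ∫ x in {x | x ∈ upperHalf n ∧ firstCoord n x ≤ l},
            (‖reflFst n l x - emb n y‖ ^ (α - (n : ℝ)) -
                ‖x - emb n y‖ ^ (α - (n : ℝ))) *
              (v (reflFst n l x) ^ κ * ‖reflFst n l x - xo n‖ ^ (-s₂) -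
                v x ^ κ * ‖x - xo n‖ ^ (-s₂))) ∧
      (∀ x ∈ upperHalf n,
        v x - v (reflFst n l x) =
          ∫ y in {y : Eu (n - 1) | firstCoord (n - 1) y ≤ l},
            (‖emb n (reflFst (n - 1) l y) - x‖ ^ (α - (n : ℝ)) -
                ‖emb n y - x‖ ^ (α - (n : ℝ))) *
              (u (reflFst (n - 1) l y) ^ θ * ‖emb n (reflFst (n - 1) l y) - xo n‖ ^ (-s₁) -
                u y ^ θ * ‖emb n y - xo n‖ ^ (-s₁))) := by

  have hn0 : 0 < n := by omega
  have hn1 : 0 < n - 1 := by omega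
  intro l
  have hTmem : ∀ x : Eu n, reflFst n l x ∈ upperHalf n ↔ x ∈ upperHalf n := by
    intro x
    simp only [upperHalf, Set.mem_setOf_eq, lastCoord_reflFst n hn l x]
  constructor
  · -- the u identity
    intro y
    have H := key (volume : Measure (Eu n)) (reflFst n l)
      (reflFst_measurePreserving n l) (reflFst_invol n l)
      (upperHalf n) {x | firstCoord n x ≤ l}
      (upperHalf_measurableSet n)
      (measurableSet_le (firstCoord_measurable n) measurable_const)
      hTmem
      (fun x hx => by
        simp only [Set.mem_setOf_eq, not_le] at hx ⊢
        rw [firstCoord_reflFst n hn0 l x]; linarith)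
      (measure_mono_null (fun x hx => by
        obtain ⟨h1, h2⟩ := hx
        simp only [Set.mem_preimage, Set.mem_setOf_eq] at h1 h2 ⊢
        rw [firstCoord_reflFst n hn0 l x] at h2
        linarith) (hyperplane_null n hn0 l))
      (fun x => ‖x - emb n y‖ ^ (α - (n : ℝ)))
      (fun x => v x ^ κ * ‖x - xo n‖ ^ (-s₂))
      ((measurable_id.sub measurable_const).norm.pow measurable_const)
      ((hvm.pow measurable_const).mul
        ((measurable_id.sub measurable_const).norm.pow measurable_const))
      (fun x => Real.rpow_nonneg (norm_nonneg _) _)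
      (fun x hx => mul_nonneg (Real.rpow_nonneg (hv0 x hx).le _)
        (Real.rpow_nonneg (norm_nonneg _) _))
      (u y) (u (reflFst (n - 1) l y)) (hu0 y).le (hu0 _).le
      (by
        rw [hu y]
        exact lintegral_congr fun x => congrArg ENNReal.ofReal (by ring))
      (by
        rw [hu (reflFst (n - 1) l y)]
        refine lintegral_congr fun x => congrArg ENNReal.ofReal ?_
        rw [emb_reflFst n hn l y, reflFst_norm']
        ring)
    exact H
  · -- the v identity
    intro x hx
    have hTx : reflFst n l x ∈ upperHalf n := (hTmem x).mpr hx
    have H := key (volume : Measure (Eu (n - 1))) (reflFst (n - 1) l)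
      (reflFst_measurePreserving (n - 1) l) (reflFst_invol (n - 1) l)
      Set.univ {y | firstCoord (n - 1) y ≤ l}
      MeasurableSet.univ
      (measurableSet_le (firstCoord_measurable (n - 1)) measurable_const)
      (fun _ => Iff.rfl)
      (fun z hz => by
        simp only [Set.mem_setOf_eq, not_le] at hz ⊢
        rw [firstCoord_reflFst (n - 1) hn1 l z]; linarith)
      (measure_mono_null (fun z hz => by
        obtain ⟨h1, h2⟩ := hz
        simp only [Set.mem_preimage, Set.mem_setOf_eq] at h1 h2 ⊢
        rw [firstCoord_reflFst (n - 1) hn1 l z] at h2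
        linarith) (hyperplane_null (n - 1) hn1 l))
      (fun z => ‖emb n z - x‖ ^ (α - (n : ℝ)))
      (fun z => u z ^ θ * ‖emb n z - xo n‖ ^ (-s₁))
      (((emb_measurable n).sub measurable_const).norm.pow measurable_const)
      ((hum.pow measurable_const).mul
        (((emb_measurable n).sub measurable_const).norm.pow measurable_const))
      (fun z => Real.rpow_nonneg (norm_nonneg _) _)
      (fun z _ => mul_nonneg (Real.rpow_nonneg (hu0 z).le _)
        (Real.rpow_nonneg (norm_nonneg _) _))
      (v x) (v (reflFst n l x)) (hv0 x hx).le (hv0 _ hTx).le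
      (by
        rw [Measure.restrict_univ, hv x hx]
        refine lintegral_congr fun z => congrArg ENNReal.ofReal ?_
        rw [norm_sub_rev x (emb n z)]
        ring)
      (by
        rw [Measure.restrict_univ, hv (reflFst n l x) hTx]
        refine lintegral_congr fun z => congrArg ENNReal.ofReal ?_
        rw [show ‖reflFst n l x - emb n z‖ = ‖emb n (reflFst (n - 1) l z) - x‖ by
          rw [emb_reflFst n hn l z, ← reflFst_norm' n l x (emb n z), norm_sub_rev]]
        ring)
    rw [Set.univ_inter] at H
    exact H
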